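/- A graded extremal finite lattice is distributive. That is, if a finite lattice of length k has exactly k join-irreducible elements and exactly k meet-irreducible elements, and all maximal chains have the same length, then it is distributive. -/

import Mathlib

/-- A maximal chain of a finite bounded lattice: an unrefinable chain from `⊥` to `⊤`,
i.e. a list of successive cover relations starting at `⊥` and ending at `⊤`. -/
def IsMaximalChain {α : Type*} [PartialOrder α] [BoundedOrder α] (c : List α) : Prop :=
  c.Chain' (· ⋖ ·) ∧ c.head? = some ⊥ ∧ c.getLast? = some ⊤

section Aux

open Finset

variable {α : Type*} [Lattice α] [Fintype α] [BoundedOrder α]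

/-- If every sup-irreducible element below `b` is below `a`, then `b ≤ a`. -/
lemma le_of_forall_supIrred_le : ∀ b a : α, (∀ j, SupIrred j → j ≤ b → j ≤ a) → b ≤ a := by
  intro b
  induction b using WellFoundedLT.induction with
  | ind b ih =>
    intro a h
    by_cases hb : SupIrred b
    · exact h b hb le_rfl
    · rw [not_supIrred] at hb
      rcases hb with hb | ⟨c, d, hcd, hc, hd⟩
      · exact le_trans (hb bot_le) bot_le
      · have hca : c ≤ a := ih c hc a fun j hj hjc => h j hj (hjc.trans hc.le)
        have hda : d ≤ a := ih d hd a fun j hj hjd => h j hj (hjd.trans hd.le)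
        exact hcd ▸ sup_le hca hda

/-- If every inf-irreducible element above `a` is above `b`, then `b ≤ a`. -/
lemma le_of_forall_infIrred_le : ∀ a b : α, (∀ m, InfIrred m → a ≤ m → b ≤ m) → b ≤ a := by
  intro a
  induction a using WellFoundedGT.induction with
  | ind a ih =>
    intro b h
    by_cases ha : InfIrred a
    · exact h a ha le_rfl
    · rw [not_infIrred] at ha
      rcases ha with ha | ⟨c, d, hcd, hc, hd⟩
      · exact le_trans le_top (ha le_top)
      · have hca : b ≤ c := ih c hc b fun m hm hmc => h m hm (hc.le.trans hmc)
        have hda : b ≤ d := ih d hd b fun m hm hmd => h m hm (hd.le.trans hmd)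
        exact hcd ▸ le_inf hca hda

open Classical in
/-- The finset of sup-irreducible elements below `x`. -/
noncomputable def supsBelow (x : α) : Finset α :=
  Finset.univ.filter (fun j => SupIrred j ∧ j ≤ x)

open Classical in
/-- The finset of inf-irreducible elements above `x`. -/
noncomputable def infsAbove (x : α) : Finset α :=
  Finset.univ.filter (fun m => InfIrred m ∧ x ≤ m)

lemma mem_supsBelow {j x : α} : j ∈ supsBelow x ↔ SupIrred j ∧ j ≤ x := by
  classical simp [supsBelow]

lemma mem_infsAbove {m x : α} : m ∈ infsAbove x ↔ InfIrred m ∧ x ≤ m := by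
  classical simp [infsAbove]

lemma supsBelow_ssubset {a b : α} (h : a < b) : supsBelow a ⊂ supsBelow b := by
  constructor
  · intro j hj
    rw [mem_supsBelow] at *
    exact ⟨hj.1, hj.2.trans h.le⟩
  · intro hsub
    refine absurd (le_of_forall_supIrred_le b a fun j hj hjb => ?_) (not_le_of_gt h)
    have := hsub (mem_supsBelow.2 ⟨hj, hjb⟩)
    exact (mem_supsBelow.1 this).2

lemma infsAbove_ssubset {a b : α} (h : a < b) : infsAbove b ⊂ infsAbove a := by
  constructor
  · intro m hm
    rw [mem_infsAbove] at *
    exact ⟨hm.1, h.le.trans hm.2⟩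
  · intro hsub
    refine absurd (le_of_forall_infIrred_le a b fun m hm ham => ?_) (not_le_of_gt h)
    have := hsub (mem_infsAbove.2 ⟨hm, ham⟩)
    exact (mem_infsAbove.1 this).2

lemma supsBelow_cov {u v : α} (h : u ⋖ v) :
    (supsBelow u).card + 1 ≤ (supsBelow v).card :=
  Finset.card_lt_card (supsBelow_ssubset h.lt)

lemma infsAbove_cov {u v : α} (h : u ⋖ v) :
    (infsAbove v).card + 1 ≤ (infsAbove u).card :=
  Finset.card_lt_card (infsAbove_ssubset h.lt)

/-- Along a covering chain, a strictly increasing `ℕ`-valued function gains at least the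
length of the chain. -/
lemma chain_card_le {r : α → ℕ} (hr : ∀ u v : α, u ⋖ v → r u + 1 ≤ r v) :
    ∀ (c : List α) (a : α), List.Chain (· ⋖ ·) a c →
      r a + c.length ≤ r ((a :: c).getLast (List.cons_ne_nil _ _)) := by
  intro c
  induction c with
  | nil => intro a _; simp
  | cons x t ih =>
    intro a hch
    simp only [List.Chain, List.isChain_cons_cons] at hch
    have h1 := hr a x hch.1
    have h2 := ih x hch.2
    rw [List.getLast_cons (List.cons_ne_nil _ _)]
    simp only [List.length_cons]
    omega

/-- Along a covering chain, a strictly decreasing `ℕ`-valued function drops at least the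
length of the chain. -/
lemma chain_card_le' {r : α → ℕ} (hr : ∀ u v : α, u ⋖ v → r v + 1 ≤ r u) :
    ∀ (c : List α) (a : α), List.Chain (· ⋖ ·) a c →
      r ((a :: c).getLast (List.cons_ne_nil _ _)) + c.length ≤ r a := by
  intro c
  induction c with
  | nil => intro a _; simp
  | cons x t ih =>
    intro a hch
    simp only [List.Chain, List.isChain_cons_cons] at hch
    have h1 := hr a x hch.1
    have h2 := ih x hch.2
    rw [List.getLast_cons (List.cons_ne_nil _ _)]
    simp only [List.length_cons]
    omega

open Classical in
/-- In a finite lattice there is a saturated (covering) chain between any two comparable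
elements. -/
lemma exists_cov_chain_aux : ∀ (n : ℕ) (a b : α),
    (Finset.univ.filter (a ≤ ·)).card ≤ n → a ≤ b →
    ∃ c : List α, List.Chain (· ⋖ ·) a c ∧
      (a :: c).getLast (List.cons_ne_nil _ _) = b := by
  classical
  intro n
  induction n with
  | zero =>
    intro a b hcard _
    exact absurd hcard (by
      have : a ∈ Finset.univ.filter (a ≤ ·) := by simp
      have := Finset.card_pos.2 ⟨a, this⟩
      omega)
  | succ n ih =>
    intro a b hcard hab
    rcases eq_or_lt_of_le hab with rfl | hlt
    · exact ⟨[], List.Chain.nil, rfl⟩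
    · have hne : (Finset.univ.filter (fun x => a < x ∧ x ≤ b)).Nonempty :=
        ⟨b, by simp [hlt]⟩
      obtain ⟨a', ha'mem, ha'min⟩ := Finset.exists_minimal hne
      simp only [Finset.mem_filter, Finset.mem_univ, true_and] at ha'mem
      have hcov : a ⋖ a' := by
        refine ⟨ha'mem.1, fun z hz hz' => ?_⟩
        exact not_le_of_gt hz' (ha'min (by simp [hz, hz'.le.trans ha'mem.2]) hz'.le)
      have hss : Finset.univ.filter (a' ≤ ·) ⊂ Finset.univ.filter (a ≤ ·) := by
        constructor
        · intro x hx
          simp only [Finset.mem_filter, Finset.mem_univ, true_and] at *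
          exact (hcov.lt.le).trans hx
        · intro hsub
          have := hsub (show a ∈ Finset.univ.filter (a ≤ ·) by simp)
          simp only [Finset.mem_filter, Finset.mem_univ, true_and] at this
          exact absurd this (not_le_of_gt hcov.lt)
      have hcard' : (Finset.univ.filter (a' ≤ ·)).card ≤ n := by
        have := Finset.card_lt_card hss
        omega
      obtain ⟨c, hc, hl⟩ := ih a' b hcard' ha'mem.2
      refine ⟨a' :: c, List.Chain.cons hcov hc, ?_⟩
      rw [List.getLast_cons (List.cons_ne_nil _ _)]
      exact hl

lemma exists_cov_chain (a b : α) (hab : a ≤ b) :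
    ∃ c : List α, List.Chain (· ⋖ ·) a c ∧
      (a :: c).getLast (List.cons_ne_nil _ _) = b :=
  exists_cov_chain_aux _ a b le_rfl hab

lemma getLast_cons_append (a : α) (l1 l2 : List α) :
    (a :: (l1 ++ l2)).getLast (List.cons_ne_nil _ _) =
      (((a :: l1).getLast (List.cons_ne_nil _ _)) :: l2).getLast (List.cons_ne_nil _ _) := by
  induction l1 generalizing a with
  | nil => simp
  | cons x t ih =>
    simp only [List.cons_append, List.getLast_cons_cons]
    exact ih x

lemma chain_append {a : α} {l1 l2 : List α} (h1 : List.Chain (· ⋖ ·) a l1)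
    (h2 : List.Chain (· ⋖ ·) ((a :: l1).getLast (List.cons_ne_nil _ _)) l2) :
    List.Chain (· ⋖ ·) a (l1 ++ l2) := by
  induction l1 generalizing a with
  | nil => simpa using h2
  | cons x t ih =>
    simp only [List.cons_append]
    simp only [List.Chain, List.isChain_cons_cons] at h1
    rw [show (x :: (t ++ l2)) = (x :: t) ++ l2 from rfl] at *
    refine List.Chain.cons h1.1 (ih h1.2 ?_)
    simpa only [List.getLast_cons_cons] using h2

end Aux

/-- A graded extremal finite lattice is distributive: if a finite lattice of length `k`
has exactly `k` join-irreducible and `k` meet-irreducible elements, and all maximal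
chains have the same length, then it is distributive. -/
theorem stmt_1 {α : Type*} [Lattice α] [Fintype α] [BoundedOrder α] (k : ℕ)
    (hex : ∃ c : List α, IsMaximalChain c ∧ c.length = k + 1)
    (hmax : ∀ c : List α, IsMaximalChain c → c.length ≤ k + 1)
    (hgraded : ∀ c c' : List α, IsMaximalChain c → IsMaximalChain c' → c.length = c'.length)
    (hJ : {x : α | SupIrred x}.ncard = k)
    (hM : {x : α | InfIrred x}.ncard = k) :
    ∀ x y z : α, x ⊓ (y ⊔ z) = (x ⊓ y) ⊔ (x ⊓ z) := by
  classical
  obtain ⟨c₀, hc₀, hc₀len⟩ := hex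
  -- every maximal chain has length k+1
  have hlen : ∀ c : List α, IsMaximalChain c → c.length = k + 1 := fun c hc =>
    (hgraded c c₀ hc hc₀).trans hc₀len
  -- boundary values
  have hrbot : (supsBelow (⊥ : α)).card = 0 := by
    rw [Finset.card_eq_zero, Finset.eq_empty_iff_forall_notMem]
    intro j hj
    rw [mem_supsBelow] at hj
    exact hj.1.1 (le_bot_iff.1 hj.2 ▸ isMin_bot)
  have hrtop : (supsBelow (⊤ : α)).card = k := by
    rw [← hJ, Set.ncard_eq_toFinset_card']
    apply Finset.card_nbij id (fun a ha => by
        rw [Finset.mem_coe, mem_supsBelow] at ha; simp [ha.1])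
      (fun a ha b hb hab => hab)
      (fun a ha => by
        simp only [Set.coe_toFinset, Set.mem_setOf_eq] at ha
        exact ⟨a, mem_supsBelow.2 ⟨ha, le_top⟩, rfl⟩)
  have hrstop : (infsAbove (⊤ : α)).card = 0 := by
    rw [Finset.card_eq_zero, Finset.eq_empty_iff_forall_notMem]
    intro m hm
    rw [mem_infsAbove] at hm
    exact hm.1.1 (top_le_iff.1 hm.2 ▸ isMax_top)
  have hrsbot : (infsAbove (⊥ : α)).card = k := by
    rw [← hM, Set.ncard_eq_toFinset_card']
    apply Finset.card_nbij id (fun a ha => by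
        rw [Finset.mem_coe, mem_infsAbove] at ha; simp [ha.1])
      (fun a ha b hb hab => hab)
      (fun a ha => by
        simp only [Set.coe_toFinset, Set.mem_setOf_eq] at ha
        exact ⟨a, mem_infsAbove.2 ⟨ha, bot_le⟩, rfl⟩)
  -- rank + corank = k
  have hsum : ∀ x : α, (supsBelow x).card + (infsAbove x).card = k := by
    intro x
    obtain ⟨c1, hc1, hl1⟩ := exists_cov_chain (⊥ : α) x bot_le
    obtain ⟨c2, hc2, hl2⟩ := exists_cov_chain x (⊤ : α) le_top
    have hglue : List.Chain (· ⋖ ·) ⊥ (c1 ++ c2) :=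
      chain_append hc1 (hl1 ▸ hc2)
    have hglast : ((⊥ :: (c1 ++ c2)).getLast (List.cons_ne_nil _ _)) = ⊤ := by
      rw [getLast_cons_append, hl1, hl2]
    have hmaxc : IsMaximalChain (⊥ :: (c1 ++ c2)) := by
      refine ⟨hglue, rfl, ?_⟩
      rw [List.getLast?_eq_getLast (List.cons_ne_nil _ _), hglast]
    have hlentot := hlen _ hmaxc
    simp only [List.length_cons, List.length_append] at hlentot
    have h1 := chain_card_le (fun u v h => supsBelow_cov h) c1 ⊥ hc1
    have h2 := chain_card_le (fun u v h => supsBelow_cov h) c2 x hc2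
    have h3 := chain_card_le' (fun u v h => infsAbove_cov h) c1 ⊥ hc1
    have h4 := chain_card_le' (fun u v h => infsAbove_cov h) c2 x hc2
    rw [hl1] at h1 h3
    rw [hl2] at h2 h4
    rw [hrbot] at h1
    rw [hrtop] at h2
    rw [hrsbot] at h3
    rw [hrstop] at h4
    omega
  -- meets and joins of the irreducible sets
  have hmeet : ∀ x y : α, supsBelow (x ⊓ y) = supsBelow x ∩ supsBelow y := by
    intro x y
    ext j
    simp only [Finset.mem_inter, mem_supsBelow, le_inf_iff]
    tauto
  have hsub : ∀ x y : α, supsBelow x ∪ supsBelow y ⊆ supsBelow (x ⊔ y) := by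
    intro x y j hj
    rcases Finset.mem_union.1 hj with h | h <;> rw [mem_supsBelow] at * <;>
      exact ⟨h.1, le_trans h.2 (by simp)⟩
  have hmeet' : ∀ x y : α, infsAbove (x ⊔ y) = infsAbove x ∩ infsAbove y := by
    intro x y
    ext m
    simp only [Finset.mem_inter, mem_infsAbove, sup_le_iff]
    tauto
  have hsub' : ∀ x y : α, infsAbove x ∪ infsAbove y ⊆ infsAbove (x ⊓ y) := by
    intro x y m hm
    rcases Finset.mem_union.1 hm with h | h <;> rw [mem_infsAbove] at * <;>
      exact ⟨h.1, le_trans (by simp) h.2⟩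
  have key : ∀ x y : α, supsBelow (x ⊔ y) = supsBelow x ∪ supsBelow y := by
    intro x y
    refine (Finset.eq_of_subset_of_card_le (hsub x y) ?_).symm
    have e2 := Finset.card_le_card (hsub' x y)
    have hm1 := congrArg Finset.card (hmeet' x y)
    have hm2 := congrArg Finset.card (hmeet x y)
    have hu1 := Finset.card_union_add_card_inter (infsAbove x) (infsAbove y)
    have hu2 := Finset.card_union_add_card_inter (supsBelow x) (supsBelow y)
    have h2 := Finset.card_le_card (hsub x y)
    have s1 := hsum x
    have s2 := hsum y
    have s3 := hsum (x ⊔ y)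
    have s4 := hsum (x ⊓ y)
    omega
  intro x y z
  refine le_antisymm ?_ le_inf_sup
  apply le_of_forall_supIrred_le
  intro j hj hjle
  have hjx : j ≤ x := hjle.trans inf_le_left
  have hjyz : j ∈ supsBelow (y ⊔ z) := mem_supsBelow.2 ⟨hj, hjle.trans inf_le_right⟩
  rw [key] at hjyz
  rcases Finset.mem_union.1 hjyz with h | h
  · exact le_trans (le_inf hjx (mem_supsBelow.1 h).2) le_sup_left
  · exact le_trans (le_inf hjx (mem_supsBelow.1 h).2) le_sup_right
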